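/- Let (ε_i)_{i≥1} be i.i.d. standard Gaussian random variables on a probability space, let Z_0 = 0 and Z_k = ε_1 + … + ε_k, and let F_k = σ(ε_1, …, ε_k). Fix n ≥ 1, real numbers a and b with b ≠ 0, set h = exp(b(Z_n − a)) and p = exp(n b²/2 − a b), and define the potentials G_0 = exp(b Z_0) and G_k = exp(b(Z_k − Z_{k-1})) for 1 ≤ k ≤ n−1, so that ∏_{s=0}^{k-1} G_s = exp(b Z_{k-1}) for k ≥ 1 (empty product equal to 1). Then Σ_{k=0}^{n} { E[ ∏_{s=0}^{k-1} G_s ] · E[ ( E[h | F_k] )² ∏_{s=0}^{k-1} G_s^{-1} ] − p² } = n ( e^{b²} − 1 ) e^{n b² − 2 a b} = n ( e^{b²} − 1 ) p². -/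

import Mathlib

open MeasureTheory ProbabilityTheory
open scoped ENNReal NNReal

lemma gauss_pdf_mul (t x : ℝ) :
    Real.exp (t * x) * gaussianPDFReal 0 1 x = Real.exp (t ^ 2 / 2) * gaussianPDFReal t 1 x := by
  simp only [gaussianPDFReal, NNReal.coe_one, mul_one, sub_zero]
  rw [mul_left_comm, mul_left_comm (Real.exp _), ← Real.exp_add, ← Real.exp_add]
  ring_nf

lemma integral_exp_gaussianReal (t : ℝ) :
    ∫ x, Real.exp (t * x) ∂(gaussianReal 0 1) = Real.exp (t ^ 2 / 2) := by
  have hmeas : Measurable fun x => (gaussianPDFReal 0 1 x).toNNReal :=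
    (measurable_gaussianPDFReal 0 1).real_toNNReal
  rw [gaussianReal_of_var_ne_zero 0 one_ne_zero]
  have hd : gaussianPDF 0 1 = fun x => ((gaussianPDFReal 0 1 x).toNNReal : ℝ≥0∞) := rfl
  rw [hd, integral_withDensity_eq_integral_smul hmeas]
  have h1 : ∀ x, (gaussianPDFReal 0 1 x).toNNReal • Real.exp (t * x)
      = Real.exp (t ^ 2 / 2) * gaussianPDFReal t 1 x := by
    intro x
    rw [NNReal.smul_def, smul_eq_mul, Real.coe_toNNReal _ (gaussianPDFReal_nonneg 0 1 x),
      mul_comm (gaussianPDFReal 0 1 x), gauss_pdf_mul]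
  simp only [h1]
  rw [integral_const_mul, integral_gaussianPDFReal_eq_one t one_ne_zero, mul_one]

lemma integrable_exp_gaussianReal (t : ℝ) :
    Integrable (fun x => Real.exp (t * x)) (gaussianReal 0 1) := by
  have hmeas : Measurable fun x => (gaussianPDFReal 0 1 x).toNNReal :=
    (measurable_gaussianPDFReal 0 1).real_toNNReal
  rw [gaussianReal_of_var_ne_zero 0 one_ne_zero]
  have hd : gaussianPDF 0 1 = fun x => ((gaussianPDFReal 0 1 x).toNNReal : ℝ≥0∞) := rfl
  rw [hd, integrable_withDensity_iff_integrable_smul hmeas]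
  have h1 : ∀ x, (gaussianPDFReal 0 1 x).toNNReal • Real.exp (t * x)
      = Real.exp (t ^ 2 / 2) * gaussianPDFReal t 1 x := by
    intro x
    rw [NNReal.smul_def, smul_eq_mul, Real.coe_toNNReal _ (gaussianPDFReal_nonneg 0 1 x),
      mul_comm (gaussianPDFReal 0 1 x), gauss_pdf_mul]
  simp only [h1]
  exact (integrable_gaussianPDFReal t 1).const_mul _

section RV
variable {Ω : Type*} [MeasurableSpace Ω] {μ : Measure Ω}

lemma integrable_exp_rv {X : Ω → ℝ} (hX : Measurable X) (hg : μ.map X = gaussianReal 0 1)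
    (t : ℝ) : Integrable (fun ω => Real.exp (t * X ω)) μ := by
  have := integrable_exp_gaussianReal t
  rw [← hg, integrable_map_measure ((measurable_const_mul t).exp).aestronglyMeasurable
    hX.aemeasurable] at this
  exact this

lemma integral_exp_rv {X : Ω → ℝ} (hX : Measurable X) (hg : μ.map X = gaussianReal 0 1)
    (t : ℝ) : ∫ ω, Real.exp (t * X ω) ∂μ = Real.exp (t ^ 2 / 2) := by
  rw [← integral_exp_gaussianReal t, ← hg,
    integral_map hX.aemeasurable ((measurable_const_mul t).exp).aestronglyMeasurable]

lemma exp_lin [IsProbabilityMeasure μ] (ε : ℕ → Ω → ℝ) (hmeas : ∀ i, Measurable (ε i))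
    (hindep : iIndepFun ε μ)
    (hgauss : ∀ i, 1 ≤ i → μ.map (ε i) = gaussianReal 0 1)
    (c : ℕ → ℝ) (s : Finset ℕ) (hs : ∀ i ∈ s, 1 ≤ i) :
    Integrable (fun ω => Real.exp (∑ i ∈ s, c i * ε i ω)) μ ∧
    ∫ ω, Real.exp (∑ i ∈ s, c i * ε i ω) ∂μ = Real.exp (∑ i ∈ s, c i ^ 2 / 2) := by
  set Y : ℕ → Ω → ℝ := fun i ω => c i * ε i ω with hY
  have hYmeas : ∀ i, Measurable (Y i) := fun i => (hmeas i).const_mul _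
  have hYindep : iIndepFun Y μ :=
    hindep.comp (fun i x => c i * x) (fun i => measurable_const_mul _)
  have hYint : ∀ i ∈ s, Integrable (fun ω => Real.exp (1 * Y i ω)) μ := by
    intro i hi
    simp only [hY, one_mul]
    exact integrable_exp_rv (hmeas i) (hgauss i (hs i hi)) (c i)
  have hsum : ∀ ω, (∑ i ∈ s, Y i) ω = ∑ i ∈ s, c i * ε i ω := by
    intro ω; simp [hY]
  have hint : Integrable (fun ω => Real.exp (∑ i ∈ s, c i * ε i ω)) μ := by
    have := hYindep.integrable_exp_mul_sum (t := 1) hYmeas hYint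
    simpa only [one_mul, hsum] using this
  refine ⟨hint, ?_⟩
  have hmgf := hYindep.mgf_sum (t := 1) hYmeas s
  simp only [mgf, one_mul] at hmgf
  have h1 : ∫ ω, Real.exp (∑ i ∈ s, c i * ε i ω) ∂μ = ∫ ω, Real.exp ((∑ i ∈ s, Y i) ω) ∂μ := by
    congr 1; funext ω; rw [hsum]
  rw [h1, hmgf,
    Finset.prod_congr rfl (fun i hi => integral_exp_rv (hmeas i) (hgauss i (hs i hi)) (c i)),
    ← Real.exp_sum]

end RV

/-- The σ-algebra `σ(ε_1, …, ε_k)` generated by the first `k` steps of a walk. -/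
def walkFiltration {Ω : Type*} (ε : ℕ → Ω → ℝ) (k : ℕ) : MeasurableSpace Ω :=
  ⨆ i ∈ Finset.Icc 1 k, MeasurableSpace.comap (ε i) inferInstance

/-- **Optimal IPS asymptotic variance for the Gaussian random walk.**
For `Z_k = ε_1 + … + ε_k`, `h = exp(b(Z_n − a))`, `p = exp(nb²/2 − ab)` and the
optimal potentials `G_0 = exp(bZ_0)`, `G_k = exp(b(Z_k − Z_{k-1}))`, the IPS
asymptotic variance equals `n(e^{b²} − 1)e^{nb² − 2ab} = n(e^{b²} − 1)p²`. -/
theorem gaussian_walk_optimal_variance {Ω : Type*} [MeasurableSpace Ω]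
    (μ : Measure Ω) [IsProbabilityMeasure μ]
    (ε : ℕ → Ω → ℝ) (hmeas : ∀ i, Measurable (ε i))
    (hindep : iIndepFun ε μ)
    (hgauss : ∀ i, 1 ≤ i → μ.map (ε i) = gaussianReal 0 1)
    (Z : ℕ → Ω → ℝ) (hZ : ∀ k ω, Z k ω = ∑ i ∈ Finset.Icc 1 k, ε i ω)
    (n : ℕ) (hn : 1 ≤ n) (a b : ℝ) (hb : b ≠ 0)
    (h : Ω → ℝ) (hh : h = fun ω => Real.exp (b * (Z n ω - a)))
    (p : ℝ) (hp : p = Real.exp (n * b ^ 2 / 2 - a * b))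
    (G : ℕ → Ω → ℝ)
    (hG0 : G 0 = fun ω => Real.exp (b * Z 0 ω))
    (hGk : ∀ k, 1 ≤ k → k ≤ n - 1 →
      G k = fun ω => Real.exp (b * (Z k ω - Z (k - 1) ω))) :
    ∑ k ∈ Finset.range (n + 1),
        ((∫ ω, ∏ s ∈ Finset.range k, G s ω ∂μ) *
          (∫ ω, ((μ[h | walkFiltration ε k]) ω) ^ 2 *
            ∏ s ∈ Finset.range k, (G s ω)⁻¹ ∂μ) - p ^ 2) =
      n * (Real.exp (b ^ 2) - 1) * Real.exp (n * b ^ 2 - 2 * a * b) ∧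
    ∑ k ∈ Finset.range (n + 1),
        ((∫ ω, ∏ s ∈ Finset.range k, G s ω ∂μ) *
          (∫ ω, ((μ[h | walkFiltration ε k]) ω) ^ 2 *
            ∏ s ∈ Finset.range k, (G s ω)⁻¹ ∂μ) - p ^ 2) =
      n * (Real.exp (b ^ 2) - 1) * p ^ 2 := by
  have hZ0 : ∀ ω, Z 0 ω = 0 := fun ω => by simp [hZ]
  have hZ' : ∀ k ω, Z k ω = ∑ i ∈ Finset.Ioc 0 k, ε i ω := by
    intro k ω; rw [hZ, ← Finset.Icc_add_one_left_eq_Ioc, zero_add]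
  have hsup_le : ∀ s : Finset ℕ,
      (⨆ i ∈ s, MeasurableSpace.comap (ε i) inferInstance) ≤ ‹MeasurableSpace Ω› :=
    fun s => iSup₂_le fun i _ => (hmeas i).comap_le
  have hF_le : ∀ k, walkFiltration ε k ≤ ‹MeasurableSpace Ω› :=
    fun k => hsup_le (Finset.Icc 1 k)
  have hZF : ∀ k, Measurable[walkFiltration ε k] (Z k) := by
    intro k
    have h1 : Measurable[walkFiltration ε k] fun ω => ∑ i ∈ Finset.Icc 1 k, ε i ω :=
      Finset.measurable_sum _ fun i hi => measurable_iff_comap_le.mpr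
        (le_iSup₂ (f := fun j (_ : j ∈ Finset.Icc 1 k) => MeasurableSpace.comap (ε j) inferInstance) i hi)
    have hfe : Z k = fun ω => ∑ i ∈ Finset.Icc 1 k, ε i ω := funext fun ω => hZ k ω
    rw [hfe]; exact h1
  -- product of potentials
  have hprodG : ∀ k, k ≤ n → ∀ ω, ∏ s ∈ Finset.range k, G s ω = Real.exp (b * Z (k - 1) ω) := by
    intro k
    induction k with
    | zero => intro _ ω; simp [hZ0]
    | succ m ih =>
      intro hm ω
      rw [Finset.prod_range_succ]
      rcases Nat.eq_zero_or_pos m with hm0 | hm1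
      · subst hm0; simp [hG0]
      · rw [ih (Nat.le_of_succ_le hm) ω, hGk m hm1 (by omega), ← Real.exp_add]
        simp only [Nat.add_sub_cancel]
        congr 1
        ring
  -- first integral
  have hI1 : ∀ k, k ≤ n → ∫ ω, ∏ s ∈ Finset.range k, G s ω ∂μ
      = Real.exp ((k - 1 : ℕ) * (b ^ 2 / 2)) := by
    intro k hk
    have e := exp_lin ε hmeas hindep hgauss (fun _ => b) (Finset.Ioc 0 (k - 1))
      (fun i hi => (Finset.mem_Ioc.1 hi).1)
    have h1 : ∫ ω, ∏ s ∈ Finset.range k, G s ω ∂μ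
        = ∫ ω, Real.exp (∑ i ∈ Finset.Ioc 0 (k - 1), b * ε i ω) ∂μ := by
      refine integral_congr_ae (Filter.Eventually.of_forall fun ω => ?_)
      show ∏ s ∈ Finset.range k, G s ω = Real.exp (∑ i ∈ Finset.Ioc 0 (k - 1), b * ε i ω)
      rw [hprodG k hk ω, hZ' (k - 1) ω, Finset.mul_sum]
    rw [h1, e.2, Finset.sum_const, Nat.card_Ioc, nsmul_eq_mul]
    norm_num
  -- conditional expectation
  have hcond : ∀ k, k ≤ n → μ[h | walkFiltration ε k]
      =ᵐ[μ] fun ω => Real.exp (b * Z k ω - a * b) * Real.exp ((n - k : ℕ) * (b ^ 2 / 2)) := by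
    intro k hk
    set f : Ω → ℝ := fun ω => Real.exp (b * Z k ω - a * b) with hf
    set g : Ω → ℝ := fun ω => Real.exp (∑ i ∈ Finset.Ioc k n, b * ε i ω) with hg
    have hsplit : ∀ ω, Z k ω + ∑ i ∈ Finset.Ioc k n, ε i ω = Z n ω := by
      intro ω
      rw [hZ' k, hZ' n]
      exact Finset.sum_Ioc_consecutive _ (Nat.zero_le k) hk
    have hfg : h = f * g := by
      funext ω
      simp only [hh, hf, hg, Pi.mul_apply, ← Real.exp_add, ← Finset.mul_sum]
      congr 1
      rw [← hsplit ω]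
      ring
    have egl := exp_lin ε hmeas hindep hgauss (fun _ => b) (Finset.Ioc k n)
      (fun i hi => by have := (Finset.mem_Ioc.1 hi).1; omega)
    have hg_int : Integrable g μ := egl.1
    have hfg_int : Integrable (f * g) μ := by
      have e2 := exp_lin ε hmeas hindep hgauss (fun _ => b) (Finset.Ioc 0 n)
        (fun i hi => (Finset.mem_Ioc.1 hi).1)
      refine ((e2.1).const_mul (Real.exp (-(a * b)))).congr
        (Filter.Eventually.of_forall fun ω => ?_)
      simp only [hf, hg, Pi.mul_apply, ← Real.exp_add, ← Finset.mul_sum]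
      congr 1
      rw [show (∑ i ∈ Finset.Ioc 0 n, ε i ω) = Z n ω from (hZ' n ω).symm, ← hsplit ω]
      ring
    have hf_sm : StronglyMeasurable[walkFiltration ε k] f := by
      have h1 : Measurable[walkFiltration ε k] fun ω => b * Z k ω - a * b :=
        ((hZF k).const_mul b).sub_const _
      exact h1.exp.stronglyMeasurable
    set m₂ : MeasurableSpace Ω :=
      ⨆ i ∈ Finset.Ioc k n, MeasurableSpace.comap (ε i) inferInstance with hm₂
    have hm₂_le : m₂ ≤ _ := hsup_le (Finset.Ioc k n)
    have hg_sm : StronglyMeasurable[m₂] g := by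
      have h1 : Measurable[m₂] fun ω => ∑ i ∈ Finset.Ioc k n, b * ε i ω :=
        Finset.measurable_sum _ fun i hi =>
          (measurable_iff_comap_le.mpr
            (le_iSup₂ (f := fun j (_ : j ∈ Finset.Ioc k n) =>
              MeasurableSpace.comap (ε j) inferInstance) i hi)).const_mul b
      exact h1.exp.stronglyMeasurable
    have hIndep : Indep (walkFiltration ε k) m₂ μ := by
      have hbc := indep_biSup_compl (fun i => (hmeas i).comap_le) hindep {i : ℕ | i ≤ k}
      refine indep_of_indep_of_le_left (indep_of_indep_of_le_right hbc ?_) ?_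
      · exact iSup₂_le fun i hi =>
          le_iSup₂ (f := fun j (_ : j ∈ ({i : ℕ | i ≤ k}ᶜ : Set ℕ)) =>
            MeasurableSpace.comap (ε j) inferInstance) i
          (show i ∈ ({i : ℕ | i ≤ k}ᶜ : Set ℕ) by
            have := (Finset.mem_Ioc.1 hi).1
            simp only [Set.mem_compl_iff, Set.mem_setOf_eq]; omega)
      · exact iSup₂_le fun i hi =>
          le_iSup₂ (f := fun j (_ : j ∈ {i : ℕ | i ≤ k}) =>
            MeasurableSpace.comap (ε j) inferInstance) i
          (show i ∈ {i : ℕ | i ≤ k} from (Finset.mem_Icc.1 hi).2)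
    have hgc := condExp_indep_eq hm₂_le (hF_le k) hg_sm hIndep.symm
    have hmul := condExp_mul_of_stronglyMeasurable_left hf_sm (hfg ▸ hfg_int) hg_int
    have hgv : ∫ ω, g ω ∂μ = Real.exp ((n - k : ℕ) * (b ^ 2 / 2)) := by
      rw [hg, egl.2, Finset.sum_const, Nat.card_Ioc, nsmul_eq_mul]
    have hhfg : μ[h | walkFiltration ε k] = μ[f * g | walkFiltration ε k] := by rw [hfg]
    rw [hhfg]
    filter_upwards [hmul, hgc] with ω h1 h2
    rw [h1, Pi.mul_apply, h2, hgv]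
  -- second integral
  have hI2 : ∀ k, k ≤ n →
      ∫ ω, ((μ[h | walkFiltration ε k]) ω) ^ 2 * ∏ s ∈ Finset.range k, (G s ω)⁻¹ ∂μ
      = Real.exp ((n - k : ℕ) * b ^ 2) * Real.exp (-(2 * a * b)) *
        Real.exp (∑ i ∈ Finset.Ioc 0 k, (if i = k then 2 * b else b) ^ 2 / 2) := by
    intro k hk
    set c : ℕ → ℝ := fun i => if i = k then 2 * b else b with hc
    have hsum2 : ∀ ω, 2 * (b * Z k ω) - b * Z (k - 1) ω
        = ∑ i ∈ Finset.Ioc 0 k, c i * ε i ω := by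
      intro ω
      rcases k with _ | m
      · simp [hZ0]
      · rw [Finset.sum_Ioc_succ_top (Nat.zero_le m)]
        have h1 : ∀ i ∈ Finset.Ioc 0 m, c i * ε i ω = b * ε i ω := by
          intro i hi
          have : i ≠ m + 1 := by have := (Finset.mem_Ioc.1 hi).2; omega
          simp [hc, this]
        rw [Finset.sum_congr rfl h1, ← Finset.mul_sum, ← hZ' m]
        have hZs : Z (m + 1) ω = Z m ω + ε (m + 1) ω := by
          rw [hZ' (m + 1), hZ' m, Finset.sum_Ioc_succ_top (Nat.zero_le m)]
        simp only [hc, if_pos rfl, Nat.add_sub_cancel]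
        rw [hZs]
        ring
    have e2 := exp_lin ε hmeas hindep hgauss c (Finset.Ioc 0 k)
      (fun i hi => (Finset.mem_Ioc.1 hi).1)
    have h1 : ∫ ω, ((μ[h | walkFiltration ε k]) ω) ^ 2 * ∏ s ∈ Finset.range k, (G s ω)⁻¹ ∂μ
        = ∫ ω, (Real.exp ((n - k : ℕ) * b ^ 2) * Real.exp (-(2 * a * b))) *
            Real.exp (∑ i ∈ Finset.Ioc 0 k, c i * ε i ω) ∂μ := by
      refine integral_congr_ae ?_
      filter_upwards [hcond k hk] with ω hω
      rw [hω, Finset.prod_inv_distrib, hprodG k hk ω, ← hsum2 ω, ← Real.exp_neg, pow_two,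
        ← Real.exp_add, ← Real.exp_add, ← Real.exp_add, ← Real.exp_add, ← Real.exp_add]
      congr 1
      ring
    rw [h1, integral_const_mul, e2.2]
  -- per-term value
  have hterm : ∀ k, k ≤ n →
      (∫ ω, ∏ s ∈ Finset.range k, G s ω ∂μ) *
        (∫ ω, ((μ[h | walkFiltration ε k]) ω) ^ 2 * ∏ s ∈ Finset.range k, (G s ω)⁻¹ ∂μ)
      = if k = 0 then Real.exp (n * b ^ 2 - 2 * a * b)
        else Real.exp ((n + 1 : ℝ) * b ^ 2 - 2 * a * b) := by
    intro k hk
    rw [hI1 k hk, hI2 k hk]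
    rcases k with _ | m
    · simp only [if_pos rfl, Nat.zero_sub, Nat.sub_zero, Finset.Ioc_self, Finset.sum_empty,
        Real.exp_zero, Nat.cast_zero, zero_mul, mul_one, one_mul]
      rw [← Real.exp_add]
      congr 1
    · simp only [if_neg (Nat.succ_ne_zero m), Nat.add_sub_cancel]
      have hsum3 : ∑ i ∈ Finset.Ioc 0 (m + 1), ((if i = m + 1 then 2 * b else b) ^ 2 / 2)
          = m * (b ^ 2 / 2) + (2 * b) ^ 2 / 2 := by
        rw [Finset.sum_Ioc_succ_top (Nat.zero_le m), if_pos rfl]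
        congr 1
        have h2 : ∀ i ∈ Finset.Ioc 0 m, ((if i = m + 1 then 2 * b else b) ^ 2 / 2 : ℝ)
            = b ^ 2 / 2 := by
          intro i hi
          have : i ≠ m + 1 := by have := (Finset.mem_Ioc.1 hi).2; omega
          simp [this]
        rw [Finset.sum_congr rfl h2, Finset.sum_const, Nat.card_Ioc, nsmul_eq_mul]
        norm_num
      rw [hsum3, ← Real.exp_add, ← Real.exp_add, ← Real.exp_add]
      congr 1
      have hmn : (m : ℝ) + 1 ≤ (n : ℝ) := by exact_mod_cast hk
      have hcast : ((n - (m + 1) : ℕ) : ℝ) = (n : ℝ) - m - 1 := by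
        have : m + 1 ≤ n := hk
        push_cast [Nat.cast_sub this]
        ring
      rw [hcast]
      ring
  -- p squared
  have hp2 : p ^ 2 = Real.exp ((n : ℝ) * b ^ 2 - 2 * a * b) := by
    rw [hp, pow_two, ← Real.exp_add]
    congr 1
    ring
  -- the sum
  have hsum_final : ∑ k ∈ Finset.range (n + 1),
      ((∫ ω, ∏ s ∈ Finset.range k, G s ω ∂μ) *
        (∫ ω, ((μ[h | walkFiltration ε k]) ω) ^ 2 *
          ∏ s ∈ Finset.range k, (G s ω)⁻¹ ∂μ) - p ^ 2)
      = n * (Real.exp (b ^ 2) - 1) * Real.exp (n * b ^ 2 - 2 * a * b) := by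
    rw [Finset.sum_congr rfl (fun k hk => by
      rw [hterm k (Nat.lt_succ_iff.mp (Finset.mem_range.mp hk))])]
    rw [Finset.sum_range_succ']
    simp only [Nat.succ_ne_zero, if_false, eq_self_iff_true, if_true]
    rw [Finset.sum_const, Finset.card_range, nsmul_eq_mul, hp2,
      show ((n : ℝ) + 1) * b ^ 2 - 2 * a * b = b ^ 2 + ((n : ℝ) * b ^ 2 - 2 * a * b) by ring,
      Real.exp_add]
    ring
  exact ⟨hsum_final, by rw [hsum_final, hp2]⟩
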